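/- Consider a finite discounted MDP: a finite nonempty state space S, a finite nonempty action space U, a transition kernel P : S → U → PMF(S), a cost function c : S × U → ℝ with |c(s,u)| ≤ 1 for all (s,u), a discount factor γ ∈ [0,1), and an initial distribution μ₀ : PMF(S). For any two stationary policies π, π̄ : S → PMF(U), the performance difference identity holds: J(π̄) = J(π) + Σ_{t=0}^∞ γ^t E_{(s,u)~ρ_t^π̄}[A^π(s,u)], where A^π(s,u) = Q^π(s,u) − V^π(s) is the advantage function of π and ρ_t^π̄ is the time-t state–action distribution under π̄ started from μ₀. -/

import Mathlib

/-- One step of the evolution of a state–action distribution under transition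
kernel `P` and stationary policy `π`:
`(saStep P π d) (s', u') = (∑ (s,u), d (s,u) * P s u s') * π s' u'`. -/
noncomputable def saStep {S U : Type*} [Fintype S] [Fintype U]
    (P : S → U → S → ℝ) (π : S → U → ℝ) (d : S × U → ℝ) : S × U → ℝ :=
  fun su => (∑ p : S × U, d p * P p.1 p.2 su.1) * π su.1 su.2

/-- The state–action distribution at time `t`, starting from the initial
state–action distribution `init`, following policy `π`. -/
noncomputable def saDist {S U : Type*} [Fintype S] [Fintype U]
    (P : S → U → S → ℝ) (π : S → U → ℝ) (init : S × U → ℝ) : ℕ → S × U → ℝ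
  | 0 => init
  | t + 1 => saStep P π (saDist P π init t)

/-- Expected cost under a state–action distribution `d`. -/
noncomputable def expCost {S U : Type*} [Fintype S] [Fintype U]
    (c : S × U → ℝ) (d : S × U → ℝ) : ℝ :=
  ∑ p : S × U, d p * c p

/-- Dirac distribution on the state–action pair `(s, u)`. -/
def deltaSA {S U : Type*} [DecidableEq S] [DecidableEq U] (s : S) (u : U) :
    S × U → ℝ :=
  fun p => if p = (s, u) then 1 else 0

/-- The state–action value function
`Q^π(s,u) = ∑_{t} γ^t E[c(s_t,u_t) | s_0 = s, u_0 = u]`. -/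
noncomputable def Qval {S U : Type*} [Fintype S] [Fintype U]
    [DecidableEq S] [DecidableEq U]
    (P : S → U → S → ℝ) (c : S × U → ℝ) (γ : ℝ) (π : S → U → ℝ)
    (s : S) (u : U) : ℝ :=
  ∑' t : ℕ, γ ^ t * expCost c (saDist P π (deltaSA s u) t)

/-- The state value function `V^π(s) = E_{u ~ π(s)}[Q^π(s,u)]`. -/
noncomputable def Vval {S U : Type*} [Fintype S] [Fintype U]
    [DecidableEq S] [DecidableEq U]
    (P : S → U → S → ℝ) (c : S × U → ℝ) (γ : ℝ) (π : S → U → ℝ) (s : S) : ℝ :=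
  ∑ u : U, π s u * Qval P c γ π s u

/-- The advantage function `A^π(s,u) = Q^π(s,u) − V^π(s)`. -/
noncomputable def Aval {S U : Type*} [Fintype S] [Fintype U]
    [DecidableEq S] [DecidableEq U]
    (P : S → U → S → ℝ) (c : S × U → ℝ) (γ : ℝ) (π : S → U → ℝ)
    (p : S × U) : ℝ :=
  Qval P c γ π p.1 p.2 - Vval P c γ π p.1

/-- The initial state–action distribution `ρ₀^π`: sample `s ~ μ₀`, `u ~ π(s)`. -/
noncomputable def initSA {S U : Type*} (μ₀ : S → ℝ) (π : S → U → ℝ) :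
    S × U → ℝ :=
  fun p => μ₀ p.1 * π p.1 p.2

/-- The discounted objective `J(π) = ∑_t γ^t E_{(s,u) ~ ρ_t^π}[c(s,u)]`. -/
noncomputable def Jval {S U : Type*} [Fintype S] [Fintype U]
    (P : S → U → S → ℝ) (c : S × U → ℝ) (γ : ℝ) (μ₀ : S → ℝ)
    (π : S → U → ℝ) : ℝ :=
  ∑' t : ℕ, γ ^ t * expCost c (saDist P π (initSA μ₀ π) t)

section Aux

variable {S U : Type*} [Fintype S] [Fintype U]

lemma saDist_nonneg (P : S → U → S → ℝ) (π : S → U → ℝ) (d : S × U → ℝ)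
    (hP : ∀ s u s', 0 ≤ P s u s') (hπ : ∀ s u, 0 ≤ π s u) (hd : ∀ p, 0 ≤ d p)
    (t : ℕ) : ∀ p, 0 ≤ saDist P π d t p := by
  induction t with
  | zero => exact hd
  | succ t ih =>
    intro p
    exact mul_nonneg (Finset.sum_nonneg fun q _ => mul_nonneg (ih q) (hP q.1 q.2 p.1))
      (hπ p.1 p.2)

lemma saDist_sum (P : S → U → S → ℝ) (π : S → U → ℝ) (d : S × U → ℝ)
    (hP : ∀ s u, ∑ s', P s u s' = 1) (hπ : ∀ s, ∑ u, π s u = 1)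
    (hd : ∑ p, d p = 1) (t : ℕ) : ∑ p, saDist P π d t p = 1 := by
  induction t with
  | zero => exact hd
  | succ t ih =>
    show ∑ p : S × U, saStep P π (saDist P π d t) p = 1
    rw [Fintype.sum_prod_type]
    have h1 : ∀ s' : S, ∑ u', saStep P π (saDist P π d t) (s', u')
        = ∑ q : S × U, saDist P π d t q * P q.1 q.2 s' := by
      intro s'
      simp only [saStep]
      rw [← Finset.mul_sum, hπ, mul_one]
    simp_rw [h1]
    rw [Finset.sum_comm]
    simp_rw [← Finset.mul_sum, hP, mul_one]
    exact ih

lemma abs_expCost_le (c : S × U → ℝ) (d : S × U → ℝ) (hc : ∀ p, |c p| ≤ 1)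
    (hd0 : ∀ p, 0 ≤ d p) (hd1 : ∑ p, d p = 1) : |expCost c d| ≤ 1 := by
  calc |expCost c d| ≤ ∑ p : S × U, |d p * c p| := Finset.abs_sum_le_sum_abs _ _
    _ ≤ ∑ p : S × U, d p := by
        apply Finset.sum_le_sum
        intro p _
        rw [abs_mul, abs_of_nonneg (hd0 p)]
        calc d p * |c p| ≤ d p * 1 := by
              exact mul_le_mul_of_nonneg_left (hc p) (hd0 p)
          _ = d p := mul_one _
    _ = 1 := hd1

lemma summable_series (P : S → U → S → ℝ) (π : S → U → ℝ) (d : S × U → ℝ)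
    (c : S × U → ℝ) (γ : ℝ) (hγ0 : 0 ≤ γ) (hγ1 : γ < 1)
    (hP : ∀ s u s', 0 ≤ P s u s') (hPs : ∀ s u, ∑ s', P s u s' = 1)
    (hπ : ∀ s u, 0 ≤ π s u) (hπs : ∀ s, ∑ u, π s u = 1)
    (hd0 : ∀ p, 0 ≤ d p) (hd1 : ∑ p, d p = 1) (hc : ∀ p, |c p| ≤ 1) :
    Summable (fun t : ℕ => γ ^ t * expCost c (saDist P π d t)) := by
  apply Summable.of_abs
  have hb : ∀ t : ℕ, |γ ^ t * expCost c (saDist P π d t)| ≤ γ ^ t := by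
    intro t
    rw [abs_mul, abs_pow, abs_of_nonneg hγ0]
    calc γ ^ t * |expCost c (saDist P π d t)| ≤ γ ^ t * 1 := by
          apply mul_le_mul_of_nonneg_left _ (pow_nonneg hγ0 t)
          exact abs_expCost_le c _ hc (saDist_nonneg P π d hP hπ hd0 t)
            (saDist_sum P π d hPs hπs hd1 t)
      _ = γ ^ t := mul_one _
  exact Summable.of_nonneg_of_le (fun t => abs_nonneg _) hb
    (summable_geometric_of_lt_one hγ0 hγ1)

variable [DecidableEq S] [DecidableEq U]

lemma saDist_linear (P : S → U → S → ℝ) (π : S → U → ℝ) (d : S × U → ℝ)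
    (t : ℕ) (q : S × U) :
    saDist P π d t q = ∑ p : S × U, d p * saDist P π (deltaSA p.1 p.2) t q := by
  induction t generalizing q with
  | zero =>
    show d q = ∑ p : S × U, d p * deltaSA p.1 p.2 q
    have hdel : ∀ p : S × U, deltaSA p.1 p.2 q = if q = p then 1 else 0 := by
      intro p; simp [deltaSA]
    simp_rw [hdel, mul_ite, mul_one, mul_zero, Finset.sum_ite_eq, Finset.mem_univ,
      if_true]
  | succ t ih =>
    show saStep P π (saDist P π d t) q
        = ∑ p : S × U, d p * saStep P π (saDist P π (deltaSA p.1 p.2) t) q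
    simp only [saStep]
    simp_rw [ih, Finset.sum_mul, Finset.mul_sum]
    rw [Finset.sum_comm]
    apply Finset.sum_congr rfl
    intro p _
    apply Finset.sum_congr rfl
    intro r _
    ring

lemma tsum_series_eq_sum_Q (P : S → U → S → ℝ) (π : S → U → ℝ) (d : S × U → ℝ)
    (c : S × U → ℝ) (γ : ℝ) (hγ0 : 0 ≤ γ) (hγ1 : γ < 1)
    (hP : ∀ s u s', 0 ≤ P s u s') (hPs : ∀ s u, ∑ s', P s u s' = 1)
    (hπ : ∀ s u, 0 ≤ π s u) (hπs : ∀ s, ∑ u, π s u = 1)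
    (hc : ∀ p, |c p| ≤ 1) :
    (∑' t : ℕ, γ ^ t * expCost c (saDist P π d t))
      = ∑ p : S × U, d p * Qval P c γ π p.1 p.2 := by
  have hdelta : ∀ p : S × U, (∀ q, 0 ≤ deltaSA p.1 p.2 q)
      ∧ ∑ q, deltaSA p.1 p.2 q = 1 := by
    intro p
    constructor
    · intro q; unfold deltaSA; positivity
    · simp [deltaSA]
  have hexp : ∀ t : ℕ, γ ^ t * expCost c (saDist P π d t)
      = ∑ p : S × U, d p * (γ ^ t * expCost c (saDist P π (deltaSA p.1 p.2) t)) := by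
    intro t
    simp only [expCost]
    rw [Finset.sum_congr rfl (fun q _ => by rw [saDist_linear P π d t q])]
    simp_rw [Finset.sum_mul, Finset.mul_sum]
    rw [Finset.sum_comm]
    exact Finset.sum_congr rfl fun p _ => Finset.sum_congr rfl fun q _ => by ring
  simp_rw [hexp]
  rw [Summable.tsum_finsetSum (fun p _ => Summable.mul_left _
    (summable_series P π _ c γ hγ0 hγ1 hP hPs hπ hπs (hdelta p).1 (hdelta p).2 hc))]
  exact Finset.sum_congr rfl fun p _ => by rw [tsum_mul_left]; rfl

omit [DecidableEq S] [DecidableEq U] in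
lemma saDist_shift (P : S → U → S → ℝ) (π : S → U → ℝ) (d : S × U → ℝ) (t : ℕ) :
    saDist P π d (t + 1) = saDist P π (saStep P π d) t := by
  induction t with
  | zero => rfl
  | succ t ih => show saStep P π _ = saStep P π _; rw [ih]

lemma Q_bellman (P : S → U → S → ℝ) (π : S → U → ℝ)
    (c : S × U → ℝ) (γ : ℝ) (hγ0 : 0 ≤ γ) (hγ1 : γ < 1)
    (hP : ∀ s u s', 0 ≤ P s u s') (hPs : ∀ s u, ∑ s', P s u s' = 1)
    (hπ : ∀ s u, 0 ≤ π s u) (hπs : ∀ s, ∑ u, π s u = 1)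
    (hc : ∀ p, |c p| ≤ 1) (s : S) (u : U) :
    Qval P c γ π s u = c (s, u) + γ * ∑ s' : S, P s u s' * Vval P c γ π s' := by
  have hd0 : ∀ q, 0 ≤ deltaSA s u q := by intro q; unfold deltaSA; positivity
  have hd1 : ∑ q, deltaSA s u q = 1 := by simp [deltaSA]
  have hsum := summable_series P π (deltaSA s u) c γ hγ0 hγ1 hP hPs hπ hπs hd0 hd1 hc
  unfold Qval
  rw [Summable.tsum_eq_zero_add hsum]
  have h0 : γ ^ 0 * expCost c (saDist P π (deltaSA s u) 0) = c (s, u) := by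
    simp [expCost, deltaSA, saDist]
  rw [h0]
  congr 1
  have hshift : ∀ t : ℕ, γ ^ (t + 1) * expCost c (saDist P π (deltaSA s u) (t + 1))
      = γ * (γ ^ t * expCost c (saDist P π (saStep P π (deltaSA s u)) t)) := by
    intro t
    rw [saDist_shift, pow_succ]
    ring
  simp_rw [hshift]
  rw [tsum_mul_left]
  congr 1
  rw [tsum_series_eq_sum_Q P π _ c γ hγ0 hγ1 hP hPs hπ hπs hc]
  have hstep : ∀ p : S × U, saStep P π (deltaSA s u) p = P s u p.1 * π p.1 p.2 := by
    intro p
    simp only [saStep, deltaSA]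
    congr 1
    rw [Finset.sum_eq_single (s, u)]
    · simp
    · intro q _ hq; simp [hq]
    · simp
  simp_rw [hstep]
  rw [Fintype.sum_prod_type]
  apply Finset.sum_congr rfl
  intro s' _
  simp only [Vval, Finset.mul_sum]
  apply Finset.sum_congr rfl
  intro u' _
  ring

lemma Q_abs_le (P : S → U → S → ℝ) (π : S → U → ℝ)
    (c : S × U → ℝ) (γ : ℝ) (hγ0 : 0 ≤ γ) (hγ1 : γ < 1)
    (hP : ∀ s u s', 0 ≤ P s u s') (hPs : ∀ s u, ∑ s', P s u s' = 1)
    (hπ : ∀ s u, 0 ≤ π s u) (hπs : ∀ s, ∑ u, π s u = 1)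
    (hc : ∀ p, |c p| ≤ 1) (s : S) (u : U) :
    |Qval P c γ π s u| ≤ (1 - γ)⁻¹ := by
  have hd0 : ∀ q, 0 ≤ deltaSA s u q := by intro q; unfold deltaSA; positivity
  have hd1 : ∑ q, deltaSA s u q = 1 := by simp [deltaSA]
  have hsum := summable_series P π (deltaSA s u) c γ hγ0 hγ1 hP hPs hπ hπs hd0 hd1 hc
  have hbound : ∀ t : ℕ, |γ ^ t * expCost c (saDist P π (deltaSA s u) t)| ≤ γ ^ t := by
    intro t
    rw [abs_mul, abs_pow, abs_of_nonneg hγ0]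
    calc γ ^ t * |expCost c (saDist P π (deltaSA s u) t)| ≤ γ ^ t * 1 := by
          apply mul_le_mul_of_nonneg_left _ (pow_nonneg hγ0 t)
          exact abs_expCost_le c _ hc (saDist_nonneg P π _ hP hπ hd0 t)
            (saDist_sum P π _ hPs hπs hd1 t)
      _ = γ ^ t := mul_one _
  have h1 := norm_tsum_le_tsum_norm
    (f := fun t : ℕ => γ ^ t * expCost c (saDist P π (deltaSA s u) t))
    (by simpa only [Real.norm_eq_abs] using hsum.abs)
  simp only [Real.norm_eq_abs] at h1
  calc |Qval P c γ π s u| ≤ ∑' t : ℕ, |γ ^ t * expCost c (saDist P π (deltaSA s u) t)| := h1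
    _ ≤ ∑' t : ℕ, γ ^ t := Summable.tsum_le_tsum hbound hsum.abs (summable_geometric_of_lt_one hγ0 hγ1)
    _ = (1 - γ)⁻¹ := tsum_geometric_of_lt_one hγ0 hγ1

lemma V_abs_le (P : S → U → S → ℝ) (π : S → U → ℝ)
    (c : S × U → ℝ) (γ : ℝ) (hγ0 : 0 ≤ γ) (hγ1 : γ < 1)
    (hP : ∀ s u s', 0 ≤ P s u s') (hPs : ∀ s u, ∑ s', P s u s' = 1)
    (hπ : ∀ s u, 0 ≤ π s u) (hπs : ∀ s, ∑ u, π s u = 1)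
    (hc : ∀ p, |c p| ≤ 1) (s : S) :
    |Vval P c γ π s| ≤ (1 - γ)⁻¹ := by
  unfold Vval
  calc |∑ u : U, π s u * Qval P c γ π s u| ≤ ∑ u : U, |π s u * Qval P c γ π s u| :=
        Finset.abs_sum_le_sum_abs _ _
    _ ≤ ∑ u : U, π s u * (1 - γ)⁻¹ := by
        apply Finset.sum_le_sum
        intro u _
        rw [abs_mul, abs_of_nonneg (hπ s u)]
        exact mul_le_mul_of_nonneg_left
          (Q_abs_le P π c γ hγ0 hγ1 hP hPs hπ hπs hc s u) (hπ s u)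
    _ = (1 - γ)⁻¹ := by rw [← Finset.sum_mul, hπs, one_mul]

end Aux

/-- Performance difference identity: for any two stationary policies `π`, `π̄`
in a finite discounted MDP,
`J(π̄) = J(π) + ∑_t γ^t E_{(s,u) ~ ρ_t^π̄}[A^π(s,u)]`. -/
theorem performance_difference {S U : Type*}
    [Fintype S] [Nonempty S] [Fintype U] [Nonempty U]
    [DecidableEq S] [DecidableEq U]
    (P : S → U → S → ℝ)
    (hP_nonneg : ∀ s u s', 0 ≤ P s u s') (hP_sum : ∀ s u, ∑ s', P s u s' = 1)
    (c : S × U → ℝ) (hc : ∀ p, |c p| ≤ 1)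
    (γ : ℝ) (hγ0 : 0 ≤ γ) (hγ1 : γ < 1)
    (μ₀ : S → ℝ) (hμ₀_nonneg : ∀ s, 0 ≤ μ₀ s) (hμ₀_sum : ∑ s, μ₀ s = 1)
    (π πbar : S → U → ℝ)
    (hπ_nonneg : ∀ s u, 0 ≤ π s u) (hπ_sum : ∀ s, ∑ u, π s u = 1)
    (hπbar_nonneg : ∀ s u, 0 ≤ πbar s u) (hπbar_sum : ∀ s, ∑ u, πbar s u = 1) :
    Jval P c γ μ₀ πbar
      = Jval P c γ μ₀ π
        + ∑' t : ℕ, γ ^ t *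
            ∑ p : S × U, saDist P πbar (initSA μ₀ πbar) t p * Aval P c γ π p := by
  set ρ : ℕ → S × U → ℝ := saDist P πbar (initSA μ₀ πbar) with hρ
  have hinit0 : ∀ p, 0 ≤ initSA μ₀ πbar p :=
    fun p => mul_nonneg (hμ₀_nonneg p.1) (hπbar_nonneg p.1 p.2)
  have hinit1 : ∑ p, initSA μ₀ πbar p = 1 := by
    rw [Fintype.sum_prod_type]
    simp only [initSA]
    simp_rw [← Finset.mul_sum, hπbar_sum, mul_one]
    exact hμ₀_sum
  have hρ0 : ∀ t p, 0 ≤ ρ t p :=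
    fun t => saDist_nonneg P πbar _ hP_nonneg hπbar_nonneg hinit0 t
  have hρ1 : ∀ t, ∑ p, ρ t p = 1 :=
    fun t => saDist_sum P πbar _ hP_sum hπbar_sum hinit1 t
  have hV := V_abs_le P π c γ hγ0 hγ1 hP_nonneg hP_sum hπ_nonneg hπ_sum hc
  have hQ := Q_abs_le P π c γ hγ0 hγ1 hP_nonneg hP_sum hπ_nonneg hπ_sum hc
  set g : ℕ → ℝ := fun t => ∑ p : S × U, ρ t p * Vval P c γ π p.1 with hg
  set b : ℕ → ℝ := fun t => γ ^ t * g t with hb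
  have hgb : ∀ t, |g t| ≤ (1 - γ)⁻¹ := by
    intro t
    calc |g t| ≤ ∑ p : S × U, |ρ t p * Vval P c γ π p.1| :=
          Finset.abs_sum_le_sum_abs _ _
      _ ≤ ∑ p : S × U, ρ t p * (1 - γ)⁻¹ := by
          apply Finset.sum_le_sum
          intro p _
          rw [abs_mul, abs_of_nonneg (hρ0 t p)]
          exact mul_le_mul_of_nonneg_left (hV p.1) (hρ0 t p)
      _ = (1 - γ)⁻¹ := by rw [← Finset.sum_mul, hρ1, one_mul]
  -- the key per-step identity
  have hkey : ∀ t : ℕ, γ ^ t * ∑ p : S × U, ρ t p * Aval P c γ π p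
      = γ ^ t * expCost c (ρ t) + (b (t + 1) - b t) := by
    intro t
    have hQsum : ∑ p : S × U, ρ t p * Qval P c γ π p.1 p.2
        = expCost c (ρ t)
          + γ * ∑ p : S × U, ρ t p * ∑ s' : S, P p.1 p.2 s' * Vval P c γ π s' := by
      have hbell : ∀ p : S × U, Qval P c γ π p.1 p.2
          = c p + γ * ∑ s' : S, P p.1 p.2 s' * Vval P c γ π s' := by
        intro p
        have h := Q_bellman P π c γ hγ0 hγ1 hP_nonneg hP_sum hπ_nonneg hπ_sum hc p.1 p.2
        simpa using h
      simp_rw [hbell, mul_add, Finset.sum_add_distrib]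
      congr 1
      rw [Finset.mul_sum]
      exact Finset.sum_congr rfl fun p _ => by ring
    have hgsucc : g (t + 1)
        = ∑ p : S × U, ρ t p * ∑ s' : S, P p.1 p.2 s' * Vval P c γ π s' := by
      have hstep : ρ (t + 1) = saStep P πbar (ρ t) := rfl
      show ∑ p : S × U, ρ (t + 1) p * Vval P c γ π p.1 = _
      rw [hstep]
      simp only [saStep]
      rw [Fintype.sum_prod_type]
      have h2 : ∀ s' : S,
          ∑ u' : U, (∑ q : S × U, ρ t q * P q.1 q.2 s') * πbar s' u' * Vval P c γ π s'
          = (∑ q : S × U, ρ t q * P q.1 q.2 s') * Vval P c γ π s' := by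
        intro s'
        calc ∑ u' : U, (∑ q : S × U, ρ t q * P q.1 q.2 s') * πbar s' u' * Vval P c γ π s'
            = ∑ u' : U, ((∑ q : S × U, ρ t q * P q.1 q.2 s') * Vval P c γ π s')
                * πbar s' u' := Finset.sum_congr rfl fun u' _ => by ring
          _ = _ := by rw [← Finset.mul_sum, hπbar_sum, mul_one]
      simp_rw [h2, Finset.sum_mul]
      rw [Finset.sum_comm]
      apply Finset.sum_congr rfl
      intro q _
      rw [Finset.mul_sum]
      exact Finset.sum_congr rfl fun s' _ => by ring
    have hA : ∑ p : S × U, ρ t p * Aval P c γ π p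
        = (∑ p : S × U, ρ t p * Qval P c γ π p.1 p.2) - g t := by
      simp only [Aval, mul_sub, Finset.sum_sub_distrib]
      rfl
    rw [hA, hQsum, hgsucc.symm, hb]
    ring
  -- summability facts
  have hsum1 : Summable (fun t : ℕ => γ ^ t * expCost c (ρ t)) :=
    summable_series P πbar _ c γ hγ0 hγ1 hP_nonneg hP_sum hπbar_nonneg hπbar_sum
      hinit0 hinit1 hc
  have hAb : ∀ t : ℕ, |γ ^ t * ∑ p : S × U, ρ t p * Aval P c γ π p|
      ≤ γ ^ t * (2 * (1 - γ)⁻¹) := by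
    intro t
    rw [abs_mul, abs_pow, abs_of_nonneg hγ0]
    apply mul_le_mul_of_nonneg_left _ (pow_nonneg hγ0 t)
    calc |∑ p : S × U, ρ t p * Aval P c γ π p|
        ≤ ∑ p : S × U, |ρ t p * Aval P c γ π p| := Finset.abs_sum_le_sum_abs _ _
      _ ≤ ∑ p : S × U, ρ t p * (2 * (1 - γ)⁻¹) := by
          apply Finset.sum_le_sum
          intro p _
          rw [abs_mul, abs_of_nonneg (hρ0 t p)]
          apply mul_le_mul_of_nonneg_left _ (hρ0 t p)
          calc |Aval P c γ π p| ≤ |Qval P c γ π p.1 p.2| + |Vval P c γ π p.1| :=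
                abs_sub _ _
            _ ≤ (1 - γ)⁻¹ + (1 - γ)⁻¹ := add_le_add (hQ p.1 p.2) (hV p.1)
            _ = 2 * (1 - γ)⁻¹ := by ring
      _ = 2 * (1 - γ)⁻¹ := by rw [← Finset.sum_mul, hρ1, one_mul]
  have hsumA : Summable (fun t : ℕ => γ ^ t * ∑ p : S × U, ρ t p * Aval P c γ π p) := by
    apply Summable.of_abs
    exact Summable.of_nonneg_of_le (fun t => abs_nonneg _) hAb
      ((summable_geometric_of_lt_one hγ0 hγ1).mul_right _)
  have hsumb : Summable (fun t : ℕ => b (t + 1) - b t) := by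
    have heq : (fun t : ℕ => b (t + 1) - b t)
        = fun t : ℕ => (γ ^ t * ∑ p : S × U, ρ t p * Aval P c γ π p)
            - γ ^ t * expCost c (ρ t) := by
      funext t
      rw [hkey t]
      ring
    rw [heq]
    exact hsumA.sub hsum1
  -- telescoping
  have hb0 : Filter.Tendsto b Filter.atTop (nhds 0) := by
    have htend : Filter.Tendsto (fun t : ℕ => γ ^ t * (1 - γ)⁻¹)
        Filter.atTop (nhds 0) := by
      simpa using (tendsto_pow_atTop_nhds_zero_of_lt_one hγ0 hγ1).mul_const ((1 - γ)⁻¹)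
    apply squeeze_zero_norm _ htend
    intro t
    rw [Real.norm_eq_abs, hb]
    show |γ ^ t * g t| ≤ _
    rw [abs_mul, abs_pow, abs_of_nonneg hγ0]
    exact mul_le_mul_of_nonneg_left (hgb t) (pow_nonneg hγ0 t)
  have htel : (∑' t : ℕ, (b (t + 1) - b t)) = -b 0 := by
    have h1 := hsumb.hasSum.tendsto_sum_nat
    have h2 : Filter.Tendsto (fun n => ∑ i ∈ Finset.range n, (b (i + 1) - b i))
        Filter.atTop (nhds (-b 0)) := by
      simp_rw [Finset.sum_range_sub]
      simpa using hb0.sub (tendsto_const_nhds (x := b 0))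
    exact tendsto_nhds_unique h1 h2
  -- assembling the advantage series
  have hT : (∑' t : ℕ, γ ^ t * ∑ p : S × U, ρ t p * Aval P c γ π p)
      = Jval P c γ μ₀ πbar - b 0 := by
    calc (∑' t : ℕ, γ ^ t * ∑ p : S × U, ρ t p * Aval P c γ π p)
        = ∑' t : ℕ, (γ ^ t * expCost c (ρ t) + (b (t + 1) - b t)) := tsum_congr hkey
      _ = (∑' t : ℕ, γ ^ t * expCost c (ρ t)) + ∑' t : ℕ, (b (t + 1) - b t) :=
          Summable.tsum_add hsum1 hsumb
      _ = Jval P c γ μ₀ πbar - b 0 := by rw [htel, Jval]; ring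
  -- b 0 = J(π)
  have hb0J : b 0 = Jval P c γ μ₀ π := by
    have hg0 : g 0 = ∑ s : S, μ₀ s * Vval P c γ π s := by
      show ∑ p : S × U, initSA μ₀ πbar p * Vval P c γ π p.1 = _
      rw [Fintype.sum_prod_type]
      apply Finset.sum_congr rfl
      intro s _
      simp only [initSA]
      calc ∑ u : U, μ₀ s * πbar s u * Vval P c γ π s
          = ∑ u : U, (μ₀ s * Vval P c γ π s) * πbar s u :=
            Finset.sum_congr rfl fun u _ => by ring
        _ = μ₀ s * Vval P c γ π s := by rw [← Finset.mul_sum, hπbar_sum, mul_one]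
    have hJπ : Jval P c γ μ₀ π = ∑ s : S, μ₀ s * Vval P c γ π s := by
      rw [Jval, tsum_series_eq_sum_Q P π _ c γ hγ0 hγ1 hP_nonneg hP_sum hπ_nonneg
        hπ_sum hc, Fintype.sum_prod_type]
      apply Finset.sum_congr rfl
      intro s _
      simp only [initSA, Vval]
      rw [Finset.mul_sum]
      exact Finset.sum_congr rfl fun u _ => by ring
    rw [hJπ]
    show γ ^ 0 * g 0 = _
    rw [pow_zero, one_mul, hg0]
  rw [hT, hb0J]
  ring
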